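/- Let w be an area sequence and let c_0, c_1, …, c_k be its admissible insertion positions taken in admissible order. Then for every 0 ≤ i ≤ k, dinv(ins_{c_i}(w)) = dinv(w) + i. -/

import Mathlib

/-- The `i`-th letter of the word `w` (`1`-indexed, as in the paper);
defaults to `0` out of range. -/
def get1 (w : List ℕ) (i : ℕ) : ℕ := w.getD (i - 1) 0

/-- `w` is the area sequence of a Dyck path: the first letter is `0` and each
letter exceeds the previous one by at most one. -/
def IsAreaSeq (w : List ℕ) : Prop :=
  (w ≠ [] → get1 w 1 = 0) ∧ ∀ i, 1 ≤ i → i < w.length → get1 w (i + 1) ≤ get1 w i + 1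

/-- Insertion at position `i` (for `0 ≤ i ≤ n`): `ins w 0` prepends a `0`, and
for `1 ≤ i ≤ n`, `ins w i` inserts the letter `w_i + 1` just after position `i`. -/
def ins (w : List ℕ) (i : ℕ) : List ℕ :=
  w.take i ++ (if i = 0 then 0 else get1 w i + 1) :: w.drop i

/-- The area statistic: the sum of the letters. -/
def area (w : List ℕ) : ℕ := w.sum

/-- The dinv statistic: `dinv w = Σ_i d_i` where `d_i` is the number of `j > i`
with `w_j = w_i` or `w_j = w_i - 1`. -/
def dinv (w : List ℕ) : ℕ :=
  ∑ i ∈ Finset.Icc 1 w.length,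
    ((Finset.Ioc i w.length).filter
      (fun j => get1 w j = get1 w i ∨ get1 w j + 1 = get1 w i)).card

/-- The maximal value of a word (`0` for the empty word). -/
def maxVal (w : List ℕ) : ℕ := w.foldr max 0

/-- Positions of the letters of maximal value `m`. -/
def Maxb (w : List ℕ) : Finset ℕ :=
  (Finset.Icc 1 w.length).filter (fun i => get1 w i = maxVal w)

/-- Positions `i` with `w_i = m - 1` such that all letters after position `i`
are `< m`. -/
def Maxa (w : List ℕ) : Finset ℕ :=
  (Finset.Icc 1 w.length).filter (fun i =>
    get1 w i + 1 = maxVal w ∧ ∀ j ∈ Finset.Ioc i w.length, get1 w j < maxVal w)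

/-- The position of the leftmost letter equal to the maximal value `m` in the
rightmost block of consecutive letters equal to `m`. -/
def i0 (w : List ℕ) : ℕ :=
  ((Finset.Icc 1 w.length).filter (fun i =>
    get1 w i = maxVal w ∧ (i = 1 ∨ get1 w (i - 1) ≠ maxVal w))).sup id

/-- The admissible insertion positions of `w`, listed in admissible order:
the elements of `Maxb w` in decreasing order, then the elements of `Maxa w`
in decreasing order, then `i0 w - 1`.  The empty word has the single
admissible insertion position `0`. -/
def admissible (w : List ℕ) : List ℕ :=
  if w = [] then [0]
  else ((Maxb w).sort (· ≤ ·)).reverse ++ ((Maxa w).sort (· ≤ ·)).reverse ++ [i0 w - 1]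

/-- Auxiliary version of the map `ψ`, reading the reversed word. -/
def psiRev : List ℕ → List ℕ
  | [] => []
  | a :: u => ins (psiRev u) ((admissible (psiRev u)).getD a 0)

/-- The map `ψ`: `ψ(ε) = ε` and `ψ(u a) = ins_{c_a}(ψ(u))` where
`c_0, c_1, …, c_k` are the admissible insertion positions of `ψ(u)` in
admissible order. -/
def psi (w : List ℕ) : List ℕ := psiRev w.reverse

/-- The bounce sequence: `b_1 = 0`, and `b_i = b_{i-1} + 1` if
`b_{i-1} + 1 ≤ w_i`, otherwise `b_i = 0`. -/
def bseq (w : List ℕ) : ℕ → ℕ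
  | 0 => 0
  | 1 => 0
  | (i + 2) => if bseq w (i + 1) + 1 ≤ get1 w (i + 2) then bseq w (i + 1) + 1 else 0

/-- The bounces of `w`: positions `1 < i ≤ n` with `b_i = 0`. -/
def bounces (w : List ℕ) : Finset ℕ :=
  (Finset.Icc 2 w.length).filter (fun i => bseq w i = 0)

/-- The bounce statistic: the sum of the reversed positions `n - i + 1` of the
bounces of `w`. -/
def bounce (w : List ℕ) : ℕ := ∑ i ∈ bounces w, (w.length - i + 1)

/- ======== auxiliary lemmas ======== -/

/-- `Rar a b`: later letter `b` makes a dinv pair with earlier letter `a`. -/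
def Rar (a b : ℕ) : Bool := b = a || b + 1 = a

def D : List ℕ → ℕ
  | [] => 0
  | a :: t => t.countP (Rar a) + D t

lemma get1_drop (w : List ℕ) (c t : ℕ) : get1 w (c + 1 + t) = (w.drop c).getD t 0 := by
  simp only [get1, List.getD_eq_getElem?_getD, List.getElem?_drop]
  have : c + 1 + t - 1 = c + t := by omega
  rw [this]

lemma get1_take (w : List ℕ) (c t : ℕ) (ht : t < c) : get1 w (1 + t) = (w.take c).getD t 0 := by
  simp only [get1, List.getD_eq_getElem?_getD, List.getElem?_take, if_pos ht]
  have : 1 + t - 1 = t := by omega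
  rw [this]

lemma card_filter_range (q : ℕ → Bool) (l : List ℕ) :
    ((Finset.range l.length).filter (fun t => q (l.getD t 0) = true)).card = l.countP q := by
  induction l with
  | nil => simp
  | cons a t ih =>
    rw [Finset.card_filter] at *
    rw [List.length_cons, Finset.sum_range_succ', List.countP_cons, ← ih]
    simp

lemma card_filter_Ioc (q : ℕ → Bool) (w : List ℕ) (c : ℕ) :
    ((Finset.Ioc c w.length).filter (fun j => q (get1 w j) = true)).card
      = (w.drop c).countP q := by
  rw [← card_filter_range q (w.drop c), Finset.card_filter, Finset.card_filter,
    ← Finset.Ico_add_one_add_one_eq_Ioc, Finset.sum_Ico_eq_sum_range, List.length_drop]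
  have h2 : w.length + 1 - (c + 1) = w.length - c := by omega
  rw [h2]
  exact Finset.sum_congr rfl fun t _ => by rw [get1_drop]

lemma card_filter_Icc (q : ℕ → Bool) (w : List ℕ) (c : ℕ) (hc : c ≤ w.length) :
    ((Finset.Icc 1 c).filter (fun j => q (get1 w j) = true)).card
      = (w.take c).countP q := by
  rw [← card_filter_range q (w.take c), Finset.card_filter, Finset.card_filter,
    ← Finset.Ico_add_one_right_eq_Icc, Finset.sum_Ico_eq_sum_range]
  have hlen : (w.take c).length = c := by simp [Nat.min_eq_left hc]
  rw [hlen]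
  have h2 : c + 1 - 1 = c := by omega
  rw [h2]
  refine Finset.sum_congr rfl fun t ht => ?_
  simp only [Finset.mem_range] at ht
  rw [get1_take w c t ht]

lemma D_eq_sum (w : List ℕ) :
    (∑ t ∈ Finset.range w.length, (w.drop (t + 1)).countP (Rar (w.getD t 0))) = D w := by
  induction w with
  | nil => simp [D]
  | cons a t ih =>
    rw [List.length_cons, Finset.sum_range_succ', D]
    have h1 : ∀ k, ((a :: t).drop (k + 1 + 1)).countP (Rar ((a :: t).getD (k + 1) 0))
        = (t.drop (k + 1)).countP (Rar (t.getD k 0)) := fun k => by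
      simp only [List.getD_cons_succ, List.drop_succ_cons]
    have h0 : ((a :: t).drop (0 + 1)).countP (Rar ((a :: t).getD 0 0)) = t.countP (Rar a) := by
      simp
    rw [h0, Finset.sum_congr rfl fun k _ => h1 k, ih]
    omega

lemma dinv_eq_D (w : List ℕ) : dinv w = D w := by
  rw [dinv, ← D_eq_sum]
  rw [← Finset.Ico_add_one_right_eq_Icc, Finset.sum_Ico_eq_sum_range]
  have h2 : w.length + 1 - 1 = w.length := by omega
  rw [h2]
  refine Finset.sum_congr rfl fun t ht => ?_
  simp only [Finset.mem_range] at ht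
  have hg : get1 w (1 + t) = w.getD t 0 := by simp [get1]
  rw [show t + 1 = 1 + t from by omega, ← card_filter_Ioc (Rar (w.getD t 0)) w (1 + t)]
  congr 1
  apply Finset.filter_congr
  intro j _
  simp [hg, Rar]

lemma D_insert (l1 l2 : List ℕ) (x : ℕ) :
    D (l1 ++ x :: l2) = D (l1 ++ l2)
      + l1.countP (fun b => Rar b x) + l2.countP (Rar x) := by
  induction l1 with
  | nil => simp [D]; omega
  | cons a t ih =>
    simp only [List.cons_append, D, List.countP_append, List.countP_cons, ih]
    cases h : Rar a x <;> simp [h] <;> omega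

lemma sorted_filter_gt (l : List ℕ) (hl : l.Pairwise (· < ·)) :
    ∀ k, k < l.length →
      (l.filter (fun b => decide (l.getD k 0 < b))).length = l.length - 1 - k := by
  induction l with
  | nil => simp
  | cons a t ih =>
    have hst := List.pairwise_cons.mp hl
    intro k hk
    cases k with
    | zero =>
      simp only [List.getD_cons_zero, List.filter_cons, decide_eq_true_eq]
      rw [if_neg (by simp)]
      have : t.filter (fun b => decide (a < b)) = t :=
        List.filter_eq_self.mpr (fun b hb => by simp [hst.1 b hb])
      simp [this]
    | succ k =>
      have hk' : k < t.length := by simpa using hk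
      have hmem : t.getD k 0 ∈ t := by
        rw [List.getD_eq_getElem _ _ hk']; exact List.getElem_mem _
      simp only [List.getD_cons_succ, List.filter_cons, decide_eq_true_eq]
      have hlt : a < t.getD k 0 := hst.1 _ hmem
      rw [if_neg (by simpa using Nat.not_lt.mpr hlt.le)]
      rw [ih hst.2 k hk']
      simp only [List.length_cons]
      omega

lemma sort_rev_getD (s : Finset ℕ) (i : ℕ) (h : i < s.card) :
    (((s.sort (· ≤ ·)).reverse).getD i 0) ∈ s ∧
    (s.filter (fun b => (((s.sort (· ≤ ·)).reverse).getD i 0) < b)).card = i := by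
  set l := s.sort (· ≤ ·) with hl
  have hlen : l.length = s.card := Finset.length_sort _
  have hrl : l.reverse.length = l.length := List.length_reverse
  have hi' : i < l.reverse.length := by omega
  have hk : l.length - 1 - i < l.length := by omega
  have he : l.reverse.getD i 0 = l.getD (l.length - 1 - i) 0 := by
    rw [List.getD_eq_getElem _ _ hi', List.getD_eq_getElem _ _ hk, List.getElem_reverse]
  have hmem : l.getD (l.length - 1 - i) 0 ∈ l := by
    rw [List.getD_eq_getElem _ _ hk]; exact List.getElem_mem _
  constructor
  · rw [he]; exact (Finset.mem_sort _).mp hmem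
  · rw [he]
    have hcard : (s.filter (fun b => l.getD (l.length - 1 - i) 0 < b)).card
        = (l.filter (fun b => decide (l.getD (l.length - 1 - i) 0 < b))).length := by
      rw [Finset.card, Finset.filter_val, ← Finset.sort_eq s (· ≤ ·), ← hl,
        Multiset.filter_coe]
      simp
    rw [hcard, sorted_filter_gt l (((Finset.pairwise_sort s (· ≤ ·)).and (Finset.sort_nodup s (· ≤ ·))).imp fun h => lt_of_le_of_ne h.1 h.2) _ hk]
    omega

lemma mem_le_maxVal (w : List ℕ) : ∀ b ∈ w, b ≤ maxVal w := by
  induction w with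
  | nil => simp
  | cons a t ih =>
    intro b hb
    rcases List.mem_cons.mp hb with h | h
    · simp [maxVal, h]
    · calc b ≤ maxVal t := ih b h
        _ ≤ maxVal (a :: t) := by simp [maxVal]

lemma get1_le_maxVal (w : List ℕ) (j : ℕ) : get1 w j ≤ maxVal w := by
  unfold get1
  by_cases h : j - 1 < w.length
  · rw [List.getD_eq_getElem _ _ h]
    exact mem_le_maxVal w _ (List.getElem_mem _)
  · rw [List.getD_eq_default _ _ (by omega)]
    exact Nat.zero_le _

lemma maxVal_mem (w : List ℕ) (hw : w ≠ []) : maxVal w ∈ w := by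
  induction w with
  | nil => simp at hw
  | cons a t ih =>
    rcases eq_or_ne t [] with rfl | ht
    · simp [maxVal]
    · have h : maxVal (a :: t) = max a (maxVal t) := rfl
      rw [h]
      rcases Nat.le_total a (maxVal t) with h' | h'
      · rw [Nat.max_eq_right h']; exact List.mem_cons_of_mem _ (ih ht)
      · rw [Nat.max_eq_left h']; exact List.mem_cons_self

lemma exists_maxVal_pos (w : List ℕ) (hw : w ≠ []) :
    ∃ j, 1 ≤ j ∧ j ≤ w.length ∧ get1 w j = maxVal w := by
  obtain ⟨k, hk, hkeq⟩ := List.mem_iff_getElem.mp (maxVal_mem w hw)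
  exact ⟨k + 1, by omega, by omega, by
    unfold get1; simp only [Nat.add_sub_cancel]; rw [List.getD_eq_getElem _ _ hk, hkeq]⟩

lemma dinv_ins_formula (w : List ℕ) (c : ℕ) (hc : c ≤ w.length) :
    dinv (ins w c) = dinv w
      + ((Finset.Icc 1 c).filter
          (fun j => Rar (get1 w j) (if c = 0 then 0 else get1 w c + 1) = true)).card
      + ((Finset.Ioc c w.length).filter
          (fun j => Rar (if c = 0 then 0 else get1 w c + 1) (get1 w j) = true)).card := by
  rw [dinv_eq_D, dinv_eq_D, ins, D_insert, List.take_append_drop,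
    card_filter_Icc (fun b => Rar b (if c = 0 then 0 else get1 w c + 1)) w c hc,
    card_filter_Ioc (Rar (if c = 0 then 0 else get1 w c + 1)) w c]


/-- If `c_0, …, c_k` are the admissible insertion positions of an area sequence
`w` taken in admissible order, then inserting at `c_i` increases the dinv by
exactly `i`. -/
theorem dinv_ins_admissible (w : List ℕ) (hw : IsAreaSeq w)
    (i : ℕ) (hi : i < (admissible w).length) :
    dinv (ins w ((admissible w).getD i 0)) = dinv w + i := by
  by_cases hw0 : w = []
  · subst hw0
    have hi0' : i = 0 := by simpa [admissible] using hi
    subst hi0'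
    simp [admissible, ins, dinv, get1]
  · have hlenB : (((Maxb w).sort (· ≤ ·)).reverse).length = (Maxb w).card := by simp
    have hlenA : (((Maxa w).sort (· ≤ ·)).reverse).length = (Maxa w).card := by simp
    have hadm : admissible w = (((Maxb w).sort (· ≤ ·)).reverse
        ++ ((Maxa w).sort (· ≤ ·)).reverse) ++ [i0 w - 1] := by
      rw [admissible, if_neg hw0]
    have hlen : (admissible w).length = (Maxb w).card + (Maxa w).card + 1 := by
      rw [hadm]; simp only [List.length_append, hlenB, hlenA, List.length_cons,
        List.length_nil]
    rw [hlen] at hi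
    have hall : ∀ j, get1 w j ≤ maxVal w := get1_le_maxVal w
    rcases Nat.lt_or_ge i (Maxb w).card with his | his
    · -- Case 1 : insertion at an element of Maxb
      obtain ⟨hcmem, hccard⟩ := sort_rev_getD (Maxb w) i his
      set c := ((Maxb w).sort (· ≤ ·)).reverse.getD i 0 with hcdef
      have hgd : (admissible w).getD i 0 = c := by
        rw [hadm, List.getD_append _ _ _ i (by simp; omega),
          List.getD_append _ _ _ i (by rw [hlenB]; omega)]
      simp only [Maxb, Finset.mem_filter, Finset.mem_Icc] at hcmem
      have hc0 : c ≠ 0 := by omega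
      rw [hgd, dinv_ins_formula w c hcmem.1.2, if_neg hc0, hcmem.2]
      have h1 : ((Finset.Icc 1 c).filter
          (fun j => Rar (get1 w j) (maxVal w + 1) = true)).card = 0 := by
        rw [Finset.card_eq_zero, Finset.filter_eq_empty_iff]
        intro j _
        have := hall j
        simp only [Rar, Bool.or_eq_true, decide_eq_true_eq]
        omega
      have h2 : (Finset.Ioc c w.length).filter
            (fun j => Rar (maxVal w + 1) (get1 w j) = true)
          = (Maxb w).filter (fun b => c < b) := by
        ext j
        simp only [Finset.mem_filter, Finset.mem_Ioc, Maxb, Finset.mem_Icc, Rar,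
          Bool.or_eq_true, decide_eq_true_eq]
        have := hall j
        constructor
        · rintro ⟨⟨hj1, hj2⟩, h⟩
          exact ⟨⟨⟨by omega, hj2⟩, by omega⟩, hj1⟩
        · rintro ⟨⟨⟨hj1, hj2⟩, hj3⟩, hj4⟩
          exact ⟨⟨hj4, hj2⟩, by omega⟩
      rw [h1, h2, hccard]
      omega
    · rcases Nat.lt_or_ge i ((Maxb w).card + (Maxa w).card) with hia | hia
      · -- Case 2 : insertion at an element of Maxa
        have his' : i - (Maxb w).card < (Maxa w).card := by omega
        obtain ⟨hcmem, hccard⟩ := sort_rev_getD (Maxa w) (i - (Maxb w).card) his'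
        set c := ((Maxa w).sort (· ≤ ·)).reverse.getD (i - (Maxb w).card) 0 with hcdef
        have hgd : (admissible w).getD i 0 = c := by
          rw [hadm, List.getD_append _ _ _ i (by simp; omega),
            List.getD_append_right _ _ _ i (by rw [hlenB]; omega), hlenB]
        simp only [Maxa, Finset.mem_filter, Finset.mem_Icc, Finset.mem_Ioc] at hcmem
        obtain ⟨⟨hc1, hcn⟩, hcm, hclt⟩ := hcmem
        have hc0 : c ≠ 0 := by omega
        rw [hgd, dinv_ins_formula w c hcn, if_neg hc0, hcm]
        have h1 : (Finset.Icc 1 c).filter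
            (fun j => Rar (get1 w j) (maxVal w) = true) = Maxb w := by
          ext j
          simp only [Finset.mem_filter, Finset.mem_Icc, Maxb, Rar,
            Bool.or_eq_true, decide_eq_true_eq]
          have := hall j
          constructor
          · rintro ⟨⟨hj1, hj2⟩, h⟩
            exact ⟨⟨hj1, by omega⟩, by omega⟩
          · rintro ⟨⟨hj1, hj2⟩, hj3⟩
            refine ⟨⟨hj1, ?_⟩, by omega⟩
            by_contra hcon
            have := hclt j ⟨by omega, hj2⟩
            omega
        have h2 : (Finset.Ioc c w.length).filter
              (fun j => Rar (maxVal w) (get1 w j) = true)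
            = (Maxa w).filter (fun b => c < b) := by
          ext j
          simp only [Finset.mem_filter, Finset.mem_Ioc, Maxa, Finset.mem_Icc, Rar,
            Bool.or_eq_true, decide_eq_true_eq]
          have := hall j
          constructor
          · rintro ⟨⟨hj1, hj2⟩, h⟩
            have hjlt := hclt j ⟨hj1, hj2⟩
            refine ⟨⟨⟨by omega, hj2⟩, by omega, ?_⟩, hj1⟩
            intro k hk
            exact hclt k ⟨by omega, hk.2⟩
          · rintro ⟨⟨⟨hj1, hj2⟩, hj3, hj4⟩, hj5⟩
            exact ⟨⟨hj5, hj2⟩, by omega⟩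
        rw [h1, h2, hccard]
        omega
      · -- Case 3 : insertion at i0 - 1
        have hieq : i = (Maxb w).card + (Maxa w).card := by omega
        have hgd : (admissible w).getD i 0 = i0 w - 1 := by
          rw [hadm, List.getD_append_right _ _ _ i (by simp; omega)]
          simp only [List.length_append, hlenB, hlenA, hieq]
          simp
        rcases Nat.eq_zero_or_pos (maxVal w) with hm | hm
        · -- m = 0 : w is all zeroes, i0 = 1
          have hn1 : 1 ≤ w.length := by
            cases w with
            | nil => exact absurd rfl hw0
            | cons a t => simp
          have hzero : ∀ j, get1 w j = 0 := fun j => by have := hall j; omega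
          have hSset : ((Finset.Icc 1 w.length).filter (fun p =>
              get1 w p = maxVal w ∧ (p = 1 ∨ get1 w (p - 1) ≠ maxVal w))) = {1} := by
            ext p
            simp only [Finset.mem_filter, Finset.mem_Icc, Finset.mem_singleton]
            constructor
            · rintro ⟨⟨hp1, hp2⟩, _, h | h⟩
              · exact h
              · have h1 := hzero (p - 1)
                omega
            · rintro rfl
              exact ⟨⟨le_refl 1, hn1⟩, by rw [hzero 1, hm], Or.inl rfl⟩
          have hi01 : i0 w = 1 := by
            rw [i0, hSset]; simp
          rw [hgd, hi01]
          rw [dinv_ins_formula w 0 (Nat.zero_le _), if_pos rfl]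
          have h1 : ((Finset.Icc 1 0).filter
              (fun j => Rar (get1 w j) 0 = true)).card = 0 := by simp
          have h2 : (Finset.Ioc 0 w.length).filter
              (fun j => Rar 0 (get1 w j) = true) = Finset.Ioc 0 w.length := by
            apply Finset.filter_eq_self.mpr
            intro j _
            simp [Rar, hzero j]
          have hMb : Maxb w = Finset.Icc 1 w.length := by
            rw [Maxb]
            apply Finset.filter_eq_self.mpr
            intro j _
            rw [hzero j, hm]
          have hMa : Maxa w = ∅ := by
            rw [Maxa, Finset.filter_eq_empty_iff]
            intro j _
            rw [hzero j, hm]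
            simp
          rw [h1, h2, hieq, hMb, hMa]
          simp [Nat.card_Icc, Nat.card_Ioc]
        · -- m ≥ 1
          set c := i0 w - 1 with hcdef
          set Sset := ((Finset.Icc 1 w.length).filter (fun p =>
              get1 w p = maxVal w ∧ (p = 1 ∨ get1 w (p - 1) ≠ maxVal w))) with hSdef
          have hi0S : i0 w = Sset.sup id := rfl
          -- Sset is nonempty
          have hMbne : (Maxb w).Nonempty := by
            obtain ⟨j, hj1, hj2, hj3⟩ := exists_maxVal_pos w hw0
            exact ⟨j, by simp [Maxb, Finset.mem_filter, Finset.mem_Icc, hj1, hj2, hj3]⟩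
          have hSne : Sset.Nonempty := by
            set p0 := (Maxb w).min' hMbne with hp0def
            have hp0 : p0 ∈ Maxb w := Finset.min'_mem _ _
            simp only [Maxb, Finset.mem_filter, Finset.mem_Icc] at hp0
            refine ⟨p0, ?_⟩
            simp only [hSdef, Finset.mem_filter, Finset.mem_Icc]
            refine ⟨hp0.1, hp0.2, ?_⟩
            rcases Nat.eq_or_lt_of_le hp0.1.1 with h1 | h1
            · exact Or.inl h1.symm
            · refine Or.inr fun hcon => ?_
              have : p0 - 1 ∈ Maxb w := by
                simp only [Maxb, Finset.mem_filter, Finset.mem_Icc]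
                exact ⟨⟨by omega, by omega⟩, hcon⟩
              have := Finset.min'_le _ _ this
              omega
          obtain ⟨p, hpS, hpsup⟩ := Finset.exists_mem_eq_sup Sset hSne id
          have hi0mem : i0 w ∈ Sset := by rw [hi0S, hpsup]; exact hpS
          have hle_i0 : ∀ p' ∈ Sset, p' ≤ i0 w := fun p' hp' => by
            rw [hi0S]; exact Finset.le_sup (f := id) hp'
          simp only [hSdef, Finset.mem_filter, Finset.mem_Icc] at hi0mem
          obtain ⟨⟨hi01, hi0n⟩, hi0m, hi0l⟩ := hi0mem
          have hw1 : get1 w 1 = 0 := hw.1 hw0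
          have hi0ne1 : i0 w ≠ 1 := fun hcon => by rw [hcon, hw1] at hi0m; omega
          have hi02 : 2 ≤ i0 w := by omega
          have hc1 : 1 ≤ c := by omega
          have hcn : c ≤ w.length := by omega
          have hprev : get1 w c ≠ maxVal w := by
            rcases hi0l with h | h
            · exact absurd h hi0ne1
            · exact h
          have hstep := hw.2 c hc1 (by omega)
          have hwc : get1 w c + 1 = maxVal w := by
            have h1 : c + 1 = i0 w := by omega
            rw [h1, hi0m] at hstep
            have := hall c
            omega
          -- key claim: no m after a position > c whose value is not m
          have key : ∀ j, c < j → get1 w j ≠ maxVal w →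
              ∀ k, j < k → k ≤ w.length → get1 w k ≠ maxVal w := by
            intro j hj hjm
            by_contra hcon
            push_neg at hcon
            obtain ⟨k, hk1, hk2, hk3⟩ := hcon
            set T := (Finset.Ioc j w.length).filter (fun k => get1 w k = maxVal w)
              with hTdef
            have hTne : T.Nonempty :=
              ⟨k, by simp [hTdef, Finset.mem_filter, Finset.mem_Ioc, hk1, hk2, hk3]⟩
            set k0 := T.min' hTne with hk0def
            have hk0T : k0 ∈ T := Finset.min'_mem _ _
            simp only [hTdef, Finset.mem_filter, Finset.mem_Ioc] at hk0T
            obtain ⟨⟨hk01, hk02⟩, hk0m⟩ := hk0T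
            have hk0S : k0 ∈ Sset := by
              simp only [hSdef, Finset.mem_filter, Finset.mem_Icc]
              refine ⟨⟨by omega, hk02⟩, hk0m, Or.inr ?_⟩
              rcases Nat.eq_or_lt_of_le (Nat.succ_le_of_lt hk01) with h1 | h1
              · have : k0 - 1 = j := by omega
                rw [this]; exact hjm
              · intro hcon2
                have : k0 - 1 ∈ T := by
                  simp only [hTdef, Finset.mem_filter, Finset.mem_Ioc]
                  exact ⟨⟨by omega, by omega⟩, hcon2⟩
                have := Finset.min'_le _ _ this
                omega
            have := hle_i0 k0 hk0S
            omega
          have hc0 : c ≠ 0 := by omega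
          rw [hgd, dinv_ins_formula w c hcn, if_neg hc0, hwc]
          -- first count : Maxb ∩ [1, c]
          have h1 : (Finset.Icc 1 c).filter
              (fun j => Rar (get1 w j) (maxVal w) = true)
              = (Maxb w).filter (fun b => b ≤ c) := by
            ext j
            simp only [Finset.mem_filter, Finset.mem_Icc, Maxb, Rar,
              Bool.or_eq_true, decide_eq_true_eq]
            have := hall j
            constructor
            · rintro ⟨⟨hj1, hj2⟩, h⟩
              exact ⟨⟨⟨hj1, by omega⟩, by omega⟩, hj2⟩
            · rintro ⟨⟨⟨hj1, hj2⟩, hj3⟩, hj4⟩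
              exact ⟨⟨hj1, hj4⟩, by omega⟩
          -- second count : split into Maxb ∩ (c, n] and Maxa
          have hsplit : (Finset.Ioc c w.length).filter
              (fun j => Rar (maxVal w) (get1 w j) = true)
              = (Finset.Ioc c w.length).filter (fun j => get1 w j = maxVal w)
                ∪ (Finset.Ioc c w.length).filter (fun j => get1 w j + 1 = maxVal w) := by
            rw [← Finset.filter_or]
            apply Finset.filter_congr
            intro j _
            simp [Rar]
          have hdisj : Disjoint
              ((Finset.Ioc c w.length).filter (fun j => get1 w j = maxVal w))
              ((Finset.Ioc c w.length).filter (fun j => get1 w j + 1 = maxVal w)) := by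
            rw [Finset.disjoint_left]
            intro j hj1 hj2
            simp only [Finset.mem_filter] at hj1 hj2
            omega
          have h2a : (Finset.Ioc c w.length).filter (fun j => get1 w j = maxVal w)
              = (Maxb w).filter (fun b => c < b) := by
            ext j
            simp only [Finset.mem_filter, Finset.mem_Ioc, Maxb, Finset.mem_Icc]
            constructor
            · rintro ⟨⟨hj1, hj2⟩, h⟩
              exact ⟨⟨⟨by omega, hj2⟩, h⟩, hj1⟩
            · rintro ⟨⟨⟨hj1, hj2⟩, hj3⟩, hj4⟩
              exact ⟨⟨hj4, hj2⟩, hj3⟩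
          have h2b : (Finset.Ioc c w.length).filter (fun j => get1 w j + 1 = maxVal w)
              = Maxa w := by
            ext j
            simp only [Finset.mem_filter, Finset.mem_Ioc, Maxa, Finset.mem_Icc]
            constructor
            · rintro ⟨⟨hj1, hj2⟩, h⟩
              refine ⟨⟨by omega, hj2⟩, h, ?_⟩
              intro k hk
              have hne := key j hj1 (by omega) k hk.1 hk.2
              have := hall k
              omega
            · rintro ⟨⟨hj1, hj2⟩, hj3, hj4⟩
              refine ⟨⟨?_, hj2⟩, hj3⟩
              by_contra hcon
              have := hj4 (i0 w) ⟨by omega, hi0n⟩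
              omega
          have hcards := Finset.card_filter_add_card_filter_not
            (s := Maxb w) (p := fun b => b ≤ c)
          have hneg : (Maxb w).filter (fun b => ¬ b ≤ c)
              = (Maxb w).filter (fun b => c < b) := by
            apply Finset.filter_congr
            intro j _
            simp
          rw [hneg] at hcards
          rw [h1, hsplit, Finset.card_union_of_disjoint hdisj, h2a, h2b, hieq]
          omega
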